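/- Assume each μ_j is nonatomic and μ_j(C) > 0 for every j. Let (A_1, …, A_m) be any m-partition of C, set u_j := μ_j(A_j), and let h be an index with u_h = max_{j=1..m} u_j. Then the maxmin value v := sup over all m-partitions of min_j μ_j(A_j) satisfies v ≥ u_h / (1 + Σ_{j ≠ h} (u_h − u_j)/μ_j(C)). -/

import Mathlib

open MeasureTheory Filter Topology ENNReal

variable {C : Type} [MeasurableSpace C]

/-- The splitting (nonatomicity) property of a measure. -/
def SplitProp (ν : Measure C) : Prop :=
  ∀ A : Set C, MeasurableSet A → 0 < ν A → ∃ B, MeasurableSet B ∧ B ⊆ A ∧ 0 < ν B ∧ 0 < ν (A \ B)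

lemma half_piece (ν : Measure C) (hs : SplitProp ν)
    (A : Set C) (hA : MeasurableSet A) (hApos : 0 < ν A) :
    ∃ B, MeasurableSet B ∧ B ⊆ A ∧ 0 < ν B ∧ 2 * ν B ≤ ν A := by
  obtain ⟨B, hBm, hBA, hB1, hB2⟩ := hs A hA hApos
  have hadd : ν B + ν (A \ B) = ν A := by
    rw [measure_add_diff hBm.nullMeasurableSet A, Set.union_eq_self_of_subset_left hBA]
  rcases le_total (ν B) (ν (A \ B)) with hle | hle
  · exact ⟨B, hBm, hBA, hB1, by rw [two_mul]; calc ν B + ν B ≤ ν B + ν (A \ B) := by gcongr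
      _ = ν A := hadd⟩
  · refine ⟨A \ B, hA.diff hBm, Set.diff_subset, hB2, ?_⟩
    rw [two_mul]
    calc ν (A \ B) + ν (A \ B) ≤ ν B + ν (A \ B) := by gcongr
      _ = ν A := hadd

lemma small_piece (ν : Measure C) (hs : SplitProp ν)
    (A : Set C) (hA : MeasurableSet A) (hApos : 0 < ν A) (n : ℕ) :
    ∃ B, MeasurableSet B ∧ B ⊆ A ∧ 0 < ν B ∧ 2 ^ n * ν B ≤ ν A := by
  induction n with
  | zero => exact ⟨A, hA, subset_rfl, hApos, by simp⟩
  | succ n ih =>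
    obtain ⟨B, hBm, hBA, hB1, hB2⟩ := ih
    obtain ⟨B', hB'm, hB'B, hB'1, hB'2⟩ := half_piece ν hs B hBm hB1
    refine ⟨B', hB'm, hB'B.trans hBA, hB'1, ?_⟩
    calc 2 ^ (n + 1) * ν B' = 2 ^ n * (2 * ν B') := by ring
      _ ≤ 2 ^ n * ν B := by gcongr
      _ ≤ ν A := hB2

lemma sierpinski (ν : Measure C) [IsFiniteMeasure ν] (hs : SplitProp ν)
    (A : Set C) (hA : MeasurableSet A) (c : ℝ≥0∞) (hc : c ≤ ν A) :
    ∃ B, MeasurableSet B ∧ B ⊆ A ∧ ν B = c := by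
  have hct : c ≠ ∞ := (lt_of_le_of_lt hc (measure_lt_top ν A)).ne
  -- step existence
  have hstep : ∀ B : Set C, ∃ D, MeasurableSet D ∧ D ⊆ A \ B ∧ ν D ≤ c - ν B ∧
      ∀ E, MeasurableSet E → E ⊆ A \ B → ν E ≤ c - ν B → ν E ≤ 2 * ν D := by
    intro B
    set σ : ℝ≥0∞ := ⨆ (E : {E : Set C // MeasurableSet E ∧ E ⊆ A \ B ∧ ν E ≤ c - ν B}), ν E.1
      with hσ
    have hσle : σ ≤ c - ν B := iSup_le fun E => E.2.2.2
    rcases eq_or_ne σ 0 with h0 | h0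
    · refine ⟨∅, MeasurableSet.empty, Set.empty_subset _, by simp, fun E hEm hEs hEle => ?_⟩
      have : ν E ≤ σ := le_iSup_of_le ⟨E, hEm, hEs, hEle⟩ le_rfl
      rw [h0] at this
      exact this.trans zero_le
    · have hσt : σ ≠ ∞ := (lt_of_le_of_lt hσle (lt_of_le_of_lt tsub_le_self
        (lt_of_le_of_lt hc (measure_lt_top ν A)))).ne
      have hhalf : σ / 2 < σ := ENNReal.half_lt_self h0 hσt
      obtain ⟨E, hE⟩ := lt_iSup_iff.mp hhalf
      refine ⟨E.1, E.2.1, E.2.2.1, E.2.2.2, fun F hFm hFs hFle => ?_⟩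
      have h1 : ν F ≤ σ := le_iSup_of_le ⟨F, hFm, hFs, hFle⟩ le_rfl
      have h2 : σ = 2 * (σ / 2) := by
        rw [mul_comm, ENNReal.div_mul_cancel two_ne_zero ENNReal.ofNat_ne_top]
      calc ν F ≤ σ := h1
        _ = 2 * (σ / 2) := h2
        _ ≤ 2 * ν E.1 := by gcongr
  choose D hDm hDs hDle hDmax using hstep
  -- the greedy sequence
  set f : ℕ → Set C := fun k => Nat.rec ∅ (fun _ Bk => Bk ∪ D Bk) k with hf
  have hf0 : f 0 = ∅ := rfl
  have hfs : ∀ k, f (k + 1) = f k ∪ D (f k) := fun k => rfl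
  have hinv : ∀ k, MeasurableSet (f k) ∧ f k ⊆ A ∧ ν (f k) ≤ c := by
    intro k
    induction k with
    | zero => exact ⟨MeasurableSet.empty, Set.empty_subset _, by rw [hf0]; simp⟩
    | succ k ih =>
      obtain ⟨h1, h2, h3⟩ := ih
      refine ⟨h1.union (hDm _), Set.union_subset h2 ((hDs _).trans Set.diff_subset), ?_⟩
      calc ν (f k ∪ D (f k)) ≤ ν (f k) + ν (D (f k)) := measure_union_le _ _
        _ ≤ ν (f k) + (c - ν (f k)) := by gcongr; exact hDle _
        _ = c := add_tsub_cancel_of_le h3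
  have hmono : Monotone f := monotone_nat_of_le_succ fun k => by
    rw [hfs]; exact Set.subset_union_left
  have hadd : ∀ k, ν (f (k + 1)) = ν (f k) + ν (D (f k)) := by
    intro k
    rw [hfs, measure_union _ (hDm _)]
    exact Set.disjoint_left.mpr fun x hx hx' => ((hDs _) hx').2 hx
  set B := ⋃ k, f k with hB
  have hBm : MeasurableSet B := MeasurableSet.iUnion fun k => (hinv k).1
  have hBA : B ⊆ A := Set.iUnion_subset fun k => (hinv k).2.1
  have hBc : ν B ≤ c := by
    rw [hB, hmono.directed_le.measure_iUnion]
    exact iSup_le fun k => (hinv k).2.2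
  refine ⟨B, hBm, hBA, le_antisymm hBc ?_⟩
  by_contra h'
  push_neg at h'
  have hr : 0 < c - ν B := tsub_pos_of_lt h'
  have hABpos : c - ν B ≤ ν (A \ B) := by
    have : ν B + ν (A \ B) = ν A := by
      rw [measure_add_diff hBm.nullMeasurableSet A, Set.union_eq_self_of_subset_left hBA]
    rw [tsub_le_iff_right]
    calc c ≤ ν A := hc
      _ = ν B + ν (A \ B) := this.symm
      _ ≤ ν (A \ B) + ν B := by rw [add_comm]
  -- find n with ν A < 2 ^ n * (c - ν B)
  obtain ⟨n0, hn0⟩ : ∃ n : ℕ, ν A / (c - ν B) < n :=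
    ENNReal.exists_nat_gt (by
      refine (ENNReal.div_lt_top (measure_ne_top ν A) hr.ne').ne)
  have hn : ν A < 2 ^ n0 * (c - ν B) := by
    have h2 : (n0 : ℝ≥0∞) ≤ 2 ^ n0 := by
      exact_mod_cast Nat.cast_le.mpr (Nat.lt_two_pow_self (n := n0)).le
    have := (ENNReal.div_lt_iff (Or.inl hr.ne')
      (Or.inl (ne_top_of_le_ne_top hct tsub_le_self))).mp hn0
    calc ν A < n0 * (c - ν B) := this
      _ ≤ 2 ^ n0 * (c - ν B) := by gcongr
  obtain ⟨E, hEm, hEs, hE1, hE2⟩ := small_piece ν hs (A \ B) (hA.diff hBm)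
    (lt_of_lt_of_le hr hABpos) n0
  have hEr : ν E < c - ν B := by
    have h1 : 2 ^ n0 * ν E ≤ ν A := hE2.trans (measure_mono Set.diff_subset)
    have := lt_of_le_of_lt h1 hn
    exact lt_of_mul_lt_mul_left this (by positivity)
  -- every step grabs at least ν E / 2
  have hkey : ∀ k, ν E ≤ 2 * ν (D (f k)) := by
    intro k
    refine hDmax (f k) E hEm (hEs.trans (Set.diff_subset_diff_right (Set.subset_iUnion f k))) ?_
    calc ν E ≤ c - ν B := hEr.le
      _ ≤ c - ν (f k) := by
          gcongr
          exact fun x hx => Set.mem_iUnion.mpr ⟨k, hx⟩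
  have hgrow : ∀ k : ℕ, (k : ℝ≥0∞) * ν E ≤ 2 * ν (f k) := by
    intro k
    induction k with
    | zero => simp
    | succ k ih =>
      rw [hadd, mul_add]
      push_cast
      calc ((k : ℝ≥0∞) + 1) * ν E = k * ν E + ν E := by ring
        _ ≤ 2 * ν (f k) + 2 * ν (D (f k)) := add_le_add ih (hkey k)
  obtain ⟨k, hk⟩ : ∃ k : ℕ, 2 * c / ν E < k :=
    ENNReal.exists_nat_gt (ENNReal.div_lt_top (by
      simpa using mul_ne_top ENNReal.ofNat_ne_top hct) hE1.ne').ne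
  have h2c : 2 * c < (k : ℝ≥0∞) * ν E := (ENNReal.div_lt_iff (Or.inl hE1.ne')
    (Or.inl (measure_ne_top ν E))).mp hk
  have h2c' : (k : ℝ≥0∞) * ν E ≤ 2 * c :=
    (hgrow k).trans (by gcongr; exact (hinv k).2.2)
  exact absurd (lt_of_lt_of_le h2c h2c') (lt_irrefl _)

lemma chain (ν : Measure C) [IsFiniteMeasure ν] (hs : SplitProp ν)
    (A : Set C) (hA : MeasurableSet A) (n : ℕ) (hn : 0 < n) :
    ∃ T : ℕ → Set C, (∀ k, MeasurableSet (T k)) ∧ (∀ k, T k ⊆ T (k + 1)) ∧ T 0 = ∅ ∧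
      (∀ k, T k ⊆ A) ∧ (∀ k < n, ν (T (k + 1) \ T k) = ν A / n) ∧ ν (A \ T n) = 0 := by
  set x : ℝ≥0∞ := ν A / n with hx
  have hnn : (n : ℝ≥0∞) ≠ 0 := by exact_mod_cast hn.ne'
  have hnt : (n : ℝ≥0∞) ≠ ∞ := natCast_ne_top n
  have hnx : (n : ℝ≥0∞) * x = ν A := ENNReal.mul_div_cancel hnn hnt
  have hstep : ∀ B : Set C, ∃ D, MeasurableSet D ∧ D ⊆ A \ B ∧
      ((MeasurableSet B ∧ x ≤ ν (A \ B)) → ν D = x) := by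
    intro B
    by_cases hB : MeasurableSet B ∧ x ≤ ν (A \ B)
    · obtain ⟨D, h1, h2, h3⟩ := sierpinski ν hs (A \ B) (hA.diff hB.1) x hB.2
      exact ⟨D, h1, h2, fun _ => h3⟩
    · exact ⟨∅, MeasurableSet.empty, Set.empty_subset _, fun h => absurd h hB⟩
  choose D hDm hDs hDx using hstep
  set f : ℕ → Set C := fun k => Nat.rec ∅ (fun _ Bk => Bk ∪ D Bk) k with hf
  have hf0 : f 0 = ∅ := rfl
  have hfs : ∀ k, f (k + 1) = f k ∪ D (f k) := fun k => rfl
  have hinv : ∀ k, MeasurableSet (f k) ∧ f k ⊆ A ∧ (k ≤ n → ν (f k) = k * x) := by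
    intro k
    induction k with
    | zero => exact ⟨MeasurableSet.empty, Set.empty_subset _, fun _ => by rw [hf0]; simp⟩
    | succ k ih =>
      obtain ⟨h1, h2, h3⟩ := ih
      have hDsub : D (f k) ⊆ A := (hDs _).trans Set.diff_subset
      refine ⟨h1.union (hDm _), Set.union_subset h2 hDsub, fun hk => ?_⟩
      have hkn : k ≤ n := (Nat.le_succ k).trans hk
      have hμk : ν (f k) = k * x := h3 hkn
      have hcond : x ≤ ν (A \ f k) := by
        have hdiff : ν (A \ f k) = ν A - ν (f k) :=
          measure_diff h2 h1.nullMeasurableSet (measure_ne_top _ _)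
        rw [hdiff]
        refine ENNReal.le_sub_of_add_le_right (measure_ne_top _ _) ?_
        calc x + ν (f k) = x + k * x := by rw [hμk]
          _ = ((k : ℝ≥0∞) + 1) * x := by ring
          _ ≤ (n : ℝ≥0∞) * x := by
              gcongr
              exact_mod_cast hk
          _ = ν A := hnx
      have hDval : ν (D (f k)) = x := hDx _ ⟨h1, hcond⟩
      have hdisj : Disjoint (f k) (D (f k)) :=
        Set.disjoint_left.mpr fun a ha ha' => ((hDs _) ha').2 ha
      rw [hfs, measure_union hdisj (hDm _), hμk, hDval]
      push_cast
      ring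
  have hmono : ∀ k, f k ⊆ f (k + 1) := fun k => by rw [hfs]; exact Set.subset_union_left
  have hdiffeq : ∀ k, f (k + 1) \ f k = D (f k) := by
    intro k
    rw [hfs, Set.union_diff_left]
    exact sdiff_eq_self_iff_disjoint.mpr
      (Set.disjoint_left.mpr fun a ha ha' => ((hDs _) ha').2 ha)
  refine ⟨f, fun k => (hinv k).1, hmono, hf0, fun k => (hinv k).2.1, ?_, ?_⟩
  · intro k hk
    rw [hdiffeq k]
    have hcond : x ≤ ν (A \ f k) := by
      have h2 := (hinv k).2.1
      have hdiff : ν (A \ f k) = ν A - ν (f k) :=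
        measure_diff h2 (hinv k).1.nullMeasurableSet (measure_ne_top _ _)
      rw [hdiff]
      refine ENNReal.le_sub_of_add_le_right (measure_ne_top _ _) ?_
      rw [(hinv k).2.2 hk.le]
      calc x + k * x = ((k : ℝ≥0∞) + 1) * x := by ring
        _ ≤ (n : ℝ≥0∞) * x := by gcongr; exact_mod_cast hk
        _ = ν A := hnx
    exact hDx _ ⟨(hinv k).1, hcond⟩
  · have h2 := (hinv n).2.1
    rw [measure_diff h2 (hinv n).1.nullMeasurableSet (measure_ne_top _ _),
      (hinv n).2.2 le_rfl, hnx, tsub_self]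

lemma propdiv {m : ℕ} (μ : Fin m → Measure C) [hfin : ∀ j, IsFiniteMeasure (μ j)]
    (ν : Measure C) [IsFiniteMeasure ν] (hs : SplitProp ν)
    (hle : ∀ j (S : Set C), μ j S ≤ ν S)
    (A : Set C) (hA : MeasurableSet A) (p : Fin m → ℕ) (q : ℕ) (hq : ∑ j, p j + 1 ≤ q) :
    ∃ P : Fin m → Set C, (∀ j, MeasurableSet (P j)) ∧ (∀ j, P j ⊆ A) ∧
      (∀ i j, i ≠ j → Disjoint (P i) (P j)) ∧
      ∀ j, (p j : ℝ) / q * (μ j A).toReal ≤ (μ j (P j)).toReal := by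
  have hq0 : 0 < q := lt_of_lt_of_le (Nat.succ_le_succ (Nat.zero_le _)) hq
  have hqR : (0 : ℝ) < q := by exact_mod_cast hq0
  set a : Fin m → ℝ := fun j => (μ j A).toReal with ha
  have ha0 : ∀ j, 0 ≤ a j := fun j => ENNReal.toReal_nonneg
  -- replace demands of null players by 0
  set p' : Fin m → ℕ := fun j => if a j = 0 then 0 else p j with hp'
  have hp'le : ∀ j, p' j ≤ p j := fun j => by
    by_cases h : a j = 0 <;> simp [hp', h]
  -- it suffices to prove the statement for p'
  suffices hsuff : ∃ P : Fin m → Set C, (∀ j, MeasurableSet (P j)) ∧ (∀ j, P j ⊆ A) ∧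
      (∀ i j, i ≠ j → Disjoint (P i) (P j)) ∧
      ∀ j, (p' j : ℝ) / q * a j ≤ (μ j (P j)).toReal by
    obtain ⟨P, h1, h2, h3, h4⟩ := hsuff
    refine ⟨P, h1, h2, h3, fun j => ?_⟩
    by_cases h : a j = 0
    · have h0 : ((μ j) A).toReal = 0 := h
      rw [h0, mul_zero]
      exact ENNReal.toReal_nonneg
    · have : p' j = p j := by simp [hp', h]
      rw [← this]; exact h4 j
  -- the set of players with positive value
  set S : Finset (Fin m) := Finset.univ.filter (fun j => 0 < a j) with hS
  rcases Finset.eq_empty_or_nonempty S with hSe | hSne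
  · refine ⟨fun _ => ∅, fun _ => MeasurableSet.empty, fun _ => Set.empty_subset _,
      fun _ _ _ => disjoint_bot_left, fun j => ?_⟩
    have : p' j = 0 := by
      have : ¬ (0 < a j) := fun hcon => (Finset.notMem_empty j) (hSe ▸ (by
        simp [hS, hcon] : j ∈ S))
      have haj : a j = 0 := le_antisymm (not_lt.mp this) (ha0 j)
      simp [hp', haj]
    simp [this]
  · -- minimum positive value
    set amin : ℝ := S.inf' hSne a with hamin
    have hamin0 : 0 < amin := by
      rw [hamin]
      rw [Finset.lt_inf'_iff]
      intro j hj
      exact (Finset.mem_filter.mp hj).2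
    have haminle : ∀ j, 0 < a j → amin ≤ a j := fun j hj =>
      Finset.inf'_le a (by simp [hS, hj])
    -- choose grid size n
    set n : ℕ := ⌈(ν A).toReal * q ^ 2 / amin⌉₊ + 1 with hn
    have hn0 : 0 < n := Nat.succ_pos _
    set δ : ℝ := (ν A).toReal / n with hδ
    have hδ0 : 0 ≤ δ := div_nonneg ENNReal.toReal_nonneg (by positivity)
    have hδsmall : δ * q ^ 2 ≤ amin := by
      rw [hδ]
      rw [div_mul_eq_mul_div, div_le_iff₀ (by positivity : (0:ℝ) < (n:ℝ))]
      calc (ν A).toReal * q ^ 2 = (ν A).toReal * q ^ 2 / amin * amin := by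
            rw [div_mul_cancel₀ _ hamin0.ne']
        _ ≤ n * amin := by
            refine mul_le_mul_of_nonneg_right ?_ hamin0.le
            rw [hn]
            push_cast
            exact (Nat.le_ceil _).trans (by linarith)
        _ = amin * n := mul_comm _ _

    obtain ⟨T, hTm, hTstep, hT0, hTA, hTdiff, hTlast⟩ := chain ν hs A hA n hn0
    have hTmono : ∀ k k', k ≤ k' → T k ⊆ T k' := fun k k' h =>
      monotone_nat_of_le_succ hTstep h
    set G : Fin m → ℕ → ℝ := fun j k => (μ j (T k)).toReal with hG
    have hGmono : ∀ j k k', k ≤ k' → G j k ≤ G j k' := fun j k k' h =>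
      ENNReal.toReal_mono (measure_ne_top _ _) (measure_mono (hTmono k k' h))
    have hG0 : ∀ j, G j 0 = 0 := fun j => by
      rw [hG]; simp only; rw [hT0]; simp
    have hGn : ∀ j, G j n = a j := by
      intro j
      have h1 : μ j (A \ T n) = 0 :=
        le_antisymm (le_trans (hle j _) (le_of_eq hTlast)) zero_le
      have h2 : μ j A ≤ μ j (T n) := by
        calc μ j A ≤ μ j (T n ∪ (A \ T n)) := measure_mono (fun x hx => by
              by_cases hxT : x ∈ T n
              · exact Or.inl hxT
              · exact Or.inr ⟨hx, hxT⟩)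
          _ ≤ μ j (T n) + μ j (A \ T n) := measure_union_le _ _
          _ = μ j (T n) := by rw [h1, add_zero]
      have h3 : μ j (T n) = μ j A := le_antisymm (measure_mono (hTA n)) h2
      rw [hG]; simp only; rw [h3]
    have hGstep : ∀ j, ∀ k, k < n → G j (k + 1) ≤ G j k + δ := by
      intro j k hk
      have hsub : T (k + 1) ⊆ T k ∪ (T (k + 1) \ T k) := fun x hx => by
        by_cases hh : x ∈ T k
        · exact Or.inl hh
        · exact Or.inr ⟨hx, hh⟩
      have hmeas : μ j (T (k + 1)) ≤ μ j (T k) + μ j (T (k + 1) \ T k) :=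
        (measure_mono hsub).trans (measure_union_le _ _)
      have h2 : G j (k + 1) ≤ G j k + (μ j (T (k + 1) \ T k)).toReal := by
        rw [hG]; simp only
        rw [← ENNReal.toReal_add (measure_ne_top _ _) (measure_ne_top _ _)]
        exact ENNReal.toReal_mono
          (ENNReal.add_ne_top.mpr ⟨measure_ne_top _ _, measure_ne_top _ _⟩) hmeas
      have h3 : (μ j (T (k + 1) \ T k)).toReal ≤ δ := by
        have hd : (ν (T (k + 1) \ T k)).toReal = δ := by
          rw [hTdiff k hk, hδ, ENNReal.toReal_div]
          simp
        rw [← hd]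
        exact ENNReal.toReal_mono (measure_ne_top _ _) (hle j _)
      linarith
    -- the inner induction
    have inner : ∀ (M : ℕ) (pp : Fin m → ℕ) (k0 : ℕ), k0 ≤ n → ∑ j, pp j = M →
        (∀ j, 1 ≤ pp j → (M : ℝ) / q * a j + M * δ ≤ a j - G j k0) →
        ∃ P : Fin m → Set C, (∀ j, MeasurableSet (P j)) ∧ (∀ j, P j ⊆ A \ T k0) ∧
          (∀ i j, i ≠ j → Disjoint (P i) (P j)) ∧
          ∀ j, (pp j : ℝ) / q * a j ≤ (μ j (P j)).toReal := by
      intro M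
      induction M with
      | zero =>
        intro pp k0 hk0 hsum hinv
        have hz : ∀ j, pp j = 0 := fun j =>
          Finset.sum_eq_zero_iff.mp hsum j (Finset.mem_univ j)
        exact ⟨fun _ => ∅, fun _ => MeasurableSet.empty, fun _ => Set.empty_subset _,
          fun _ _ _ => disjoint_bot_left, fun j => by simp [hz j]⟩
      | succ M ih =>
        intro pp k0 hk0 hsum hinv
        set J : Finset (Fin m) := Finset.univ.filter (fun j => 1 ≤ pp j) with hJ
        have hJne : J.Nonempty := by
          by_contra hcon
          rw [Finset.not_nonempty_iff_eq_empty] at hcon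
          have hzz : ∀ j, pp j = 0 := by
            intro j
            by_contra hj
            have hmem : j ∈ J := by
              rw [hJ, Finset.mem_filter]
              exact ⟨Finset.mem_univ j, by omega⟩
            rw [hcon] at hmem
            exact Finset.notMem_empty j hmem
          rw [Finset.sum_congr rfl (fun j _ => hzz j)] at hsum
          simp at hsum
        have hQn : ∀ j ∈ J, k0 ≤ n ∧ a j / q ≤ G j n - G j k0 := by
          intro j hj
          refine ⟨hk0, ?_⟩
          have hpj : 1 ≤ pp j := (Finset.mem_filter.mp hj).2
          have h1 := hinv j hpj
          rw [hGn j]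
          push_cast at h1
          have h2 : (1 : ℝ) / q * a j ≤ ((M : ℝ) + 1) / q * a j := by
            gcongr
            · linarith [Nat.cast_nonneg (α := ℝ) M]
          have h3 : (0 : ℝ) ≤ ((M : ℝ) + 1) * δ :=
            mul_nonneg (by positivity) hδ0
          have h4 : a j / q = 1 / q * a j := by ring
          linarith
        -- hitting times
        set kf : Fin m → ℕ := fun j => sInf {k | k0 ≤ k ∧ a j / q ≤ G j k - G j k0} with hkf
        have hkfmem : ∀ j ∈ J, k0 ≤ kf j ∧ a j / q ≤ G j (kf j) - G j k0 := fun j hj =>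
          Nat.sInf_mem (⟨n, hQn j hj⟩ : {k | k0 ≤ k ∧ a j / q ≤ G j k - G j k0}.Nonempty)
        have hkfle : ∀ j ∈ J, kf j ≤ n := fun j hj => Nat.sInf_le (hQn j hj)
        have hkfmin : ∀ j (k : ℕ), k < kf j → ¬(k0 ≤ k ∧ a j / q ≤ G j k - G j k0) :=
          fun j k hk => Nat.notMem_of_lt_sInf hk
        have hupper : ∀ j ∈ J, ∀ k', k0 ≤ k' → k' ≤ kf j → k' ≤ n →
            G j k' - G j k0 ≤ a j / q + δ := by
          intro j hj k' h1 h2 h3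
          rcases eq_or_lt_of_le h1 with he | hlt
          · rw [← he]
            have h5 : 0 ≤ a j / q := div_nonneg (ha0 j) hqR.le
            linarith
          · have hk'1 : k0 ≤ k' - 1 := by omega
            have hk'lt : k' - 1 < kf j := by omega
            have hnot := hkfmin j (k' - 1) hk'lt
            push_neg at hnot
            have hlt2 : G j (k' - 1) - G j k0 < a j / q := hnot hk'1
            have hstep2 : G j k' ≤ G j (k' - 1) + δ := by
              have heq : k' - 1 + 1 = k' := by omega
              have := hGstep j (k' - 1) (by omega)
              rwa [heq] at this
            linarith
        obtain ⟨js, hjsJ, hjsmin⟩ := J.exists_min_image kf hJne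
        have hppjs : 1 ≤ pp js := (Finset.mem_filter.mp hjsJ).2
        have hk'0 : k0 ≤ kf js := (hkfmem js hjsJ).1
        have hk'n : kf js ≤ n := hkfle js hjsJ
        set pp' : Fin m → ℕ := Function.update pp js (pp js - 1) with hpp'
        have hsum' : ∑ j, pp' j = M := by
          rw [hpp', Finset.sum_update_of_mem (Finset.mem_univ js)]
          have hs1 : ∑ x ∈ Finset.univ.erase js, pp x + pp js = M + 1 := by
            rw [Finset.sum_erase_add _ _ (Finset.mem_univ js)]
            exact hsum
          have hs2 : Finset.univ \ {js} = Finset.univ.erase js := by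
            rw [Finset.sdiff_singleton_eq_erase]
          rw [hs2]
          omega
        have hinv' : ∀ j, 1 ≤ pp' j → (M : ℝ) / q * a j + M * δ ≤ a j - G j (kf js) := by
          intro j hj
          have hpj : 1 ≤ pp j := by
            by_cases hjs : j = js
            · subst hjs
              rw [hpp', Function.update_self] at hj
              omega
            · rwa [hpp', Function.update_of_ne hjs] at hj
          have hjJ : j ∈ J := by
            rw [hJ, Finset.mem_filter]
            exact ⟨Finset.mem_univ j, hpj⟩
          have h1 := hinv j hpj
          push_cast at h1
          have h2 : G j (kf js) - G j k0 ≤ a j / q + δ :=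
            hupper j hjJ (kf js) hk'0 (hjsmin j hjJ) hk'n
          have h3 : ((M : ℝ) + 1) / q * a j = (M : ℝ) / q * a j + a j / q := by ring
          linarith
        obtain ⟨P', hP1, hP2, hP3, hP4⟩ := ih pp' (kf js) hk'n hsum' hinv'
        set slab : Set C := T (kf js) \ T k0 with hslab
        have hslabm : MeasurableSet slab := (hTm (kf js)).diff (hTm k0)
        have hsubT : T k0 ⊆ T (kf js) := hTmono _ _ hk'0
        have hslabval : (μ js slab).toReal = G js (kf js) - G js k0 := by
          rw [hslab, measure_diff hsubT (hTm k0).nullMeasurableSet (measure_ne_top _ _),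
            ENNReal.toReal_sub_of_le (measure_mono hsubT) (measure_ne_top _ _)]
        have hslabge : a js / q ≤ (μ js slab).toReal := by
          rw [hslabval]; exact (hkfmem js hjsJ).2
        have hslabsub : slab ⊆ A \ T k0 := fun x hx => ⟨hTA _ hx.1, hx.2⟩
        have hP2' : ∀ j, P' j ⊆ A \ T k0 := fun j =>
          (hP2 j).trans (Set.diff_subset_diff_right hsubT)
        have hdisjslab : ∀ j, Disjoint slab (P' j) := by
          intro j
          refine Set.disjoint_left.mpr fun x hx hx' => ?_
          exact ((hP2 j) hx').2 hx.1
        refine ⟨Function.update P' js (P' js ∪ slab), ?_, ?_, ?_, ?_⟩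
        · intro j
          by_cases hjs : j = js
          · rw [hjs, Function.update_self]; exact (hP1 js).union hslabm
          · rw [Function.update_of_ne hjs]; exact hP1 j
        · intro j
          by_cases hjs : j = js
          · rw [hjs, Function.update_self]
            exact Set.union_subset (hP2' js) hslabsub
          · rw [Function.update_of_ne hjs]; exact hP2' j
        · intro i j hij
          by_cases hi : i = js
          · have hj' : j ≠ js := fun hcon => hij (hi.trans hcon.symm)
            rw [hi, Function.update_self, Function.update_of_ne hj']
            exact Disjoint.union_left (hP3 _ _ (hi ▸ hij)) (hdisjslab j)
          · by_cases hj : j = js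
            · rw [hj, Function.update_self, Function.update_of_ne hi]
              exact (Disjoint.union_left (hP3 js i (Ne.symm hi)) (hdisjslab i)).symm
            · rw [Function.update_of_ne hi, Function.update_of_ne hj]
              exact hP3 _ _ hij
        · intro j
          by_cases hjs : j = js
          · rw [hjs, Function.update_self]
            have hdisj2 : Disjoint (P' js) slab := (hdisjslab js).symm
            rw [measure_union hdisj2 hslabm,
              ENNReal.toReal_add (measure_ne_top _ _) (measure_ne_top _ _)]
            have hc1 := hP4 js
            have hc2 : (pp' js : ℝ) = (pp js : ℝ) - 1 := by
              rw [hpp', Function.update_self]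
              push_cast [Nat.cast_sub hppjs]
              ring
            have hc3 : (pp js : ℝ) / q * a js
                = (pp' js : ℝ) / q * a js + a js / q := by
              rw [hc2]; ring
            linarith
          · rw [Function.update_of_ne hjs]
            have : pp' j = pp j := by rw [hpp', Function.update_of_ne hjs]
            rw [← this]
            exact hP4 j
    have hsum'' : ∑ j, p' j + 1 ≤ q := by
      have h1 : ∑ j, p' j ≤ ∑ j, p j := Finset.sum_le_sum fun j _ => hp'le j
      omega
    have houter : ∀ j, 1 ≤ p' j →
        ((∑ j, p' j : ℕ) : ℝ) / q * a j + ((∑ j, p' j : ℕ) : ℝ) * δ ≤ a j - G j 0 := by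
      intro j hj
      have haj : 0 < a j := by
        by_contra hcon
        have hz : a j = 0 := le_antisymm (not_lt.mp hcon) (ha0 j)
        rw [hp'] at hj
        simp [hz] at hj
      rw [hG0 j, sub_zero]
      have hM1 : ((∑ j, p' j : ℕ) : ℝ) ≤ (q : ℝ) - 1 := by
        have hh : (∑ j, p' j) + 1 ≤ q := hsum''
        have : ((∑ j, p' j : ℕ) : ℝ) + 1 ≤ q := by exact_mod_cast hh
        linarith
      have hMq : ((∑ j, p' j : ℕ) : ℝ) ≤ q := by linarith
      have h2 : ((∑ j, p' j : ℕ) : ℝ) * δ ≤ a j / q := by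
        calc ((∑ j, p' j : ℕ) : ℝ) * δ ≤ q * δ := mul_le_mul_of_nonneg_right hMq hδ0
          _ ≤ amin / q := by
              rw [le_div_iff₀ hqR]
              calc (q : ℝ) * δ * q = δ * q ^ 2 := by ring
                _ ≤ amin := hδsmall
          _ ≤ a j / q := by
              gcongr
              exact haminle j haj
      have h3 : ((∑ j, p' j : ℕ) : ℝ) / q * a j ≤ a j - a j / q := by
        have hc : ((∑ j, p' j : ℕ) : ℝ) / q * a j ≤ ((q : ℝ) - 1) / q * a j := by
          gcongr
        have he : ((q : ℝ) - 1) / q * a j = a j - a j / q := by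
          field_simp
        linarith
      linarith
    obtain ⟨P, h1, h2, h3, h4⟩ := inner (∑ j, p' j) p' 0 (Nat.zero_le n) rfl houter
    exact ⟨P, h1, fun j => (h2 j).trans Set.diff_subset, h3, h4⟩

/-- Lower bound for the maxmin value. For any m-partition `A` with
values `u j = μ j (A j)` and `h` an index of maximal value,
`v ≥ u h / (1 + ∑_{j ≠ h} (u h - u j) / μ j (C))`. -/
theorem maxmin_lower_bound
    {C : Type} [MeasurableSpace C] {m : ℕ}
    (μ : Fin m → Measure C) [∀ j, IsFiniteMeasure (μ j)]
    (hna : ∀ j (A : Set C), MeasurableSet A → 0 < μ j A →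
      ∃ B, MeasurableSet B ∧ B ⊆ A ∧ 0 < μ j B ∧ 0 < μ j (A \ B))
    (hpos : ∀ j, 0 < (μ j Set.univ).toReal)
    (A : Fin m → Set C)
    (hA_meas : ∀ i, MeasurableSet (A i))
    (hA_disj : ∀ i j, i ≠ j → Disjoint (A i) (A j))
    (hA_cover : (⋃ i, A i) = Set.univ)
    (h : Fin m)
    (hmax : ∀ j, (μ j (A j)).toReal ≤ (μ h (A h)).toReal) :
    (μ h (A h)).toReal /
        (1 + ∑ j ∈ Finset.univ.erase h,
          ((μ h (A h)).toReal - (μ j (A j)).toReal) / (μ j Set.univ).toReal) ≤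
      sSup {r : ℝ | ∃ A' : Fin m → Set C, (∀ i, MeasurableSet (A' i)) ∧
          (∀ i j, i ≠ j → Disjoint (A' i) (A' j)) ∧ (⋃ i, A' i) = Set.univ ∧
          r = ⨅ j, (μ j (A' j)).toReal} := by
  classical
  haveI : Nonempty (Fin m) := ⟨h⟩
  set Tset : Set ℝ := {r : ℝ | ∃ A' : Fin m → Set C, (∀ i, MeasurableSet (A' i)) ∧
      (∀ i j, i ≠ j → Disjoint (A' i) (A' j)) ∧ (⋃ i, A' i) = Set.univ ∧
      r = ⨅ j, (μ j (A' j)).toReal} with hTset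
  set u : Fin m → ℝ := fun j => (μ j (A j)).toReal with hu
  set c : Fin m → ℝ := fun j => (μ j Set.univ).toReal with hc
  have hgoal : (μ h (A h)).toReal /
      (1 + ∑ j ∈ Finset.univ.erase h,
        ((μ h (A h)).toReal - (μ j (A j)).toReal) / (μ j Set.univ).toReal)
      = u h / (1 + ∑ j ∈ Finset.univ.erase h, (u h - u j) / c j) := rfl
  rw [hgoal]
  set D : ℝ := 1 + ∑ j ∈ Finset.univ.erase h, (u h - u j) / c j with hD
  set w : ℝ := u h / D with hw
  -- basic facts
  have hc0 : ∀ j, 0 < c j := hpos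
  have hu0 : ∀ j, 0 ≤ u j := fun j => ENNReal.toReal_nonneg
  have huh : ∀ j, u j ≤ u h := hmax
  have hD1 : 1 ≤ D := by
    rw [hD]
    have : 0 ≤ ∑ j ∈ Finset.univ.erase h, (u h - u j) / c j :=
      Finset.sum_nonneg fun j _ => div_nonneg (sub_nonneg.mpr (huh j)) (hc0 j).le
    linarith
  have hD0 : 0 < D := lt_of_lt_of_le one_pos hD1
  -- the total measure
  set ν : Measure C := ∑ j, μ j with hν
  haveI hνfin : IsFiniteMeasure ν := by
    constructor
    rw [hν]
    simp only [Measure.coe_finset_sum, Finset.sum_apply]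
    exact ENNReal.sum_lt_top.mpr fun j _ => measure_lt_top (μ j) _
  have hνapp : ∀ S : Set C, ν S = ∑ j, μ j S := by
    intro S
    rw [hν]
    simp [Measure.coe_finset_sum, Finset.sum_apply]
  have hle : ∀ j (S : Set C), μ j S ≤ ν S := by
    intro j S
    rw [hνapp]
    exact Finset.single_le_sum (f := fun i => μ i S) (fun i _ => zero_le) (Finset.mem_univ j)
  have hsplit : SplitProp ν := by
    intro S hS hSpos
    have : ∃ j, 0 < μ j S := by
      by_contra hcon
      push_neg at hcon
      simp only [le_zero_iff] at hcon
      rw [hνapp] at hSpos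
      rw [Finset.sum_congr rfl (fun j _ => hcon j)] at hSpos
      simp at hSpos
    obtain ⟨j, hj⟩ := this
    obtain ⟨B, h1, h2, h3, h4⟩ := hna j S hS hj
    exact ⟨B, h1, h2, lt_of_lt_of_le h3 (hle j B), lt_of_lt_of_le h4 (hle j _)⟩
  -- partition identity
  have hμu : ∀ j, (μ j Set.univ : ℝ≥0∞) = ∑ i, μ j (A i) := by
    intro j
    rw [← hA_cover, measure_iUnion (fun i i' hii => hA_disj i i' hii) hA_meas, tsum_fintype]
  have hsumA : ∀ j, ∑ i, (μ j (A i)).toReal = c j := by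
    intro j
    rw [hc]
    simp only
    rw [hμu j, ENNReal.toReal_sum (fun i _ => measure_ne_top _ _)]
  -- weights
  set s : Fin m → ℝ := fun j => (u h - u j) / (c j * D) with hs
  have hs0 : ∀ j, 0 ≤ s j := fun j =>
    div_nonneg (sub_nonneg.mpr (huh j)) (mul_nonneg (hc0 j).le hD0.le)
  have hsh : s h = 0 := by rw [hs]; simp
  set β : Fin m → Fin m → ℝ := fun i j => if j = i then 1 / D + s i else s j with hβ
  have hβ0 : ∀ i j, 0 ≤ β i j := by
    intro i j
    rw [hβ]
    by_cases hji : j = i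
    · simp only [hji, if_pos rfl]
      have := hs0 i
      positivity
    · simp only [if_neg hji]
      exact hs0 j
  have hssum : ∑ j, s j = (D - 1) / D := by
    have h1 : ∑ j, s j = s h + ∑ j ∈ Finset.univ.erase h, s j :=
      (Finset.add_sum_erase _ s (Finset.mem_univ h)).symm
    rw [h1, hsh, zero_add]
    have h2 : ∀ j ∈ Finset.univ.erase h, s j = ((u h - u j) / c j) / D := by
      intro j _
      rw [hs]
      simp only
      rw [div_div]
    rw [Finset.sum_congr rfl h2, ← Finset.sum_div]
    congr 1
    rw [hD]
    ring
  have hβsum : ∀ i, ∑ j, β i j = 1 := by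
    intro i
    have h1 : ∑ j, β i j = β i i + ∑ j ∈ Finset.univ.erase i, β i j :=
      (Finset.add_sum_erase _ _ (Finset.mem_univ i)).symm
    have h2 : β i i = 1 / D + s i := by rw [hβ]; simp
    have h3 : ∑ j ∈ Finset.univ.erase i, β i j = ∑ j ∈ Finset.univ.erase i, s j := by
      apply Finset.sum_congr rfl
      intro j hj
      rw [hβ]
      simp only [if_neg (Finset.ne_of_mem_erase hj)]
    have h4 : s i + ∑ j ∈ Finset.univ.erase i, s j = ∑ j, s j :=
      Finset.add_sum_erase _ s (Finset.mem_univ i)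
    rw [h1, h2, h3]
    have h5 : ∑ j ∈ Finset.univ.erase i, s j = (D - 1) / D - s i := by
      rw [← hssum, ← h4]; ring
    rw [h5]
    field_simp
    ring
  have hβle1 : ∀ i j, β i j ≤ 1 := by
    intro i j
    rw [← hβsum i]
    exact Finset.single_le_sum (fun j' _ => hβ0 i j') (Finset.mem_univ j)
  -- B j = w
  have hBj : ∀ j, ∑ i, β i j * (μ j (A i)).toReal = w := by
    intro j
    have h1 : ∑ i, β i j * (μ j (A i)).toReal
        = β j j * u j + ∑ i ∈ Finset.univ.erase j, β i j * (μ j (A i)).toReal :=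
      (Finset.add_sum_erase _ _ (Finset.mem_univ j)).symm
    have h2 : β j j = 1 / D + s j := by rw [hβ]; simp
    have h3 : ∑ i ∈ Finset.univ.erase j, β i j * (μ j (A i)).toReal
        = s j * ∑ i ∈ Finset.univ.erase j, (μ j (A i)).toReal := by
      rw [Finset.mul_sum]
      apply Finset.sum_congr rfl
      intro i hi
      rw [hβ]
      simp only [if_neg (Ne.symm (Finset.ne_of_mem_erase hi))]
    have h4 : ∑ i ∈ Finset.univ.erase j, (μ j (A i)).toReal = c j - u j := by
      have := Finset.add_sum_erase Finset.univ (fun i => (μ j (A i)).toReal) (Finset.mem_univ j)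
      rw [hsumA j] at this
      have hjj : (μ j (A j)).toReal = u j := rfl
      linarith [this]
    have h5 : s j * c j = (u h - u j) / D := by
      rw [hs]
      simp only
      rw [div_mul_eq_mul_div, mul_comm (c j) D, mul_div_mul_right _ _ (hc0 j).ne']
    rw [h1, h2, h3, h4, hw]
    have : (1 / D + s j) * u j + s j * (c j - u j) = u j / D + s j * c j := by ring
    rw [this, h5, ← add_div]
    have huu : u j + (u h - u j) = u h := by ring
    rw [huu]
  -- bounded above
  have hbdd : BddAbove Tset := by
    refine ⟨(μ h Set.univ).toReal, ?_⟩
    rintro r ⟨A', h1, h2, h3, rfl⟩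
    have hbb : BddBelow (Set.range fun j => (μ j (A' j)).toReal) := by
      refine ⟨0, ?_⟩
      rintro x ⟨j, rfl⟩
      exact ENNReal.toReal_nonneg
    refine le_trans (ciInf_le hbb h) ?_
    exact ENNReal.toReal_mono (measure_ne_top _ _) (measure_mono (Set.subset_univ _))
  -- key approximation step
  have hkey : ∀ ε : ℝ, 0 < ε → ∃ r ∈ Tset, w - ε ≤ r := by
    intro ε hε
    set Cr : ℝ := (ν Set.univ).toReal with hCr
    have hCr0 : 0 ≤ Cr := ENNReal.toReal_nonneg
    have hcCr : ∀ j, c j ≤ Cr := fun j => ENNReal.toReal_mono (measure_ne_top _ _) (hle j _)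
    set q : ℕ := ⌈2 * Cr / ε⌉₊ with hq
    have hq1 : (0 : ℝ) < (q : ℝ) + 1 := by positivity
    have hqe : 2 * Cr / ((q : ℝ) + 1) ≤ ε := by
      have h1 : 2 * Cr / ε ≤ (q : ℝ) := Nat.le_ceil _
      have h2 : 2 * Cr ≤ (q : ℝ) * ε := by
        rw [div_le_iff₀ hε] at h1
        linarith
      rw [div_le_iff₀ hq1]
      nlinarith [hε.le, (Nat.cast_nonneg (α := ℝ) q)]
    set p : Fin m → Fin m → ℕ := fun i j => ⌊β i j * q⌋₊ with hp
    have hpsum : ∀ i, ∑ j, p i j + 1 ≤ q + 1 := by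
      intro i
      have h1 : ((∑ j, p i j : ℕ) : ℝ) ≤ (q : ℝ) := by
        rw [Nat.cast_sum]
        calc ∑ j, ((p i j : ℕ) : ℝ) ≤ ∑ j, β i j * q := by
              apply Finset.sum_le_sum
              intro j _
              exact Nat.floor_le (mul_nonneg (hβ0 i j) (Nat.cast_nonneg q))
          _ = (∑ j, β i j) * q := by rw [← Finset.sum_mul]
          _ = q := by rw [hβsum i, one_mul]
      have h2 : ∑ j, p i j ≤ q := by exact_mod_cast h1
      omega
    choose P hP1 hP2 hP3 hP4 using fun i =>
      propdiv μ ν hsplit hle (A i) (hA_meas i) (p i) (q + 1) (hpsum i)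
    set R : Set C := ⋃ i, ⋃ j, P i j with hR
    set U : Fin m → Set C := fun j => ⋃ i, P i j with hU
    set Q : Fin m → Set C := fun j => U j ∪ (if j = h then Set.univ \ R else ∅) with hQ
    have hUm : ∀ j, MeasurableSet (U j) := fun j => MeasurableSet.iUnion fun i => hP1 i j
    have hRm : MeasurableSet R :=
      MeasurableSet.iUnion fun i => MeasurableSet.iUnion fun j => hP1 i j
    have hQm : ∀ j, MeasurableSet (Q j) := by
      intro j
      rw [hQ]
      by_cases hj : j = h
      · simp only [if_pos hj]
        exact (hUm j).union (MeasurableSet.univ.diff hRm)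
      · simp only [if_neg hj]
        exact (hUm j).union MeasurableSet.empty
    have hUdisj : ∀ j j', j ≠ j' → Disjoint (U j) (U j') := by
      intro j j' hjj
      rw [Set.disjoint_left]
      rintro x hx hx'
      simp only [hU, Set.mem_iUnion] at hx hx'
      obtain ⟨i, hi⟩ := hx
      obtain ⟨i', hi'⟩ := hx'
      by_cases hii : i = i'
      · subst hii
        exact Set.disjoint_left.mp (hP3 i j j' hjj) hi hi'
      · exact Set.disjoint_left.mp (hA_disj i i' hii) (hP2 i j hi) (hP2 i' j' hi')
    have hUR : ∀ j, U j ⊆ R := fun j => Set.iUnion_subset fun i =>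
      Set.subset_iUnion_of_subset i (Set.subset_iUnion _ j)
    have hLU : ∀ j'', Disjoint (Set.univ \ R) (U j'') := fun j'' =>
      Set.disjoint_left.mpr fun x hx hx' => hx.2 (hUR j'' hx')
    have hQdisj : ∀ j j', j ≠ j' → Disjoint (Q j) (Q j') := by
      intro j j' hjj
      rw [hQ]
      simp only
      by_cases hj : j = h
      · have hj' : ¬ j' = h := fun hcon => hjj (hj.trans hcon.symm)
        rw [if_pos hj, if_neg hj', Set.union_empty]
        exact Disjoint.union_left (hUdisj j j' hjj) (hLU j')
      · rw [if_neg hj, Set.union_empty]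
        by_cases hj' : j' = h
        · rw [if_pos hj']
          exact (Disjoint.union_left (hUdisj j' j (Ne.symm hjj)) (hLU j)).symm
        · rw [if_neg hj', Set.union_empty]
          exact hUdisj j j' hjj
    have hQcover : (⋃ j, Q j) = Set.univ := by
      apply Set.eq_univ_of_forall
      intro x
      by_cases hx : x ∈ R
      · rw [hR] at hx
        simp only [Set.mem_iUnion] at hx
        obtain ⟨i, j, hij⟩ := hx
        refine Set.mem_iUnion.mpr ⟨j, ?_⟩
        rw [hQ]
        exact Or.inl (Set.mem_iUnion.mpr ⟨i, hij⟩)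
      · refine Set.mem_iUnion.mpr ⟨h, ?_⟩
        rw [hQ]
        simp only [if_pos rfl]
        exact Or.inr ⟨trivial, hx⟩
    have hval : ∀ j, w - ε ≤ (μ j (Q j)).toReal := by
      intro j
      have hsum1 : (μ j (U j)).toReal = ∑ i, (μ j (P i j)).toReal := by
        rw [hU]
        simp only
        rw [measure_iUnion (fun i i' hii => Disjoint.mono (hP2 i j) (hP2 i' j)
            (hA_disj i i' hii)) (fun i => hP1 i j), tsum_fintype,
          ENNReal.toReal_sum (fun i _ => measure_ne_top _ _)]
      have hmono1 : (μ j (U j)).toReal ≤ (μ j (Q j)).toReal := by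
        refine ENNReal.toReal_mono (measure_ne_top _ _) (measure_mono ?_)
        rw [hQ]
        exact Set.subset_union_left
      have hstep1 : ∀ i, (β i j - 2 / ((q : ℝ) + 1)) * (μ j (A i)).toReal
          ≤ (p i j : ℝ) / ((q : ℝ) + 1) * (μ j (A i)).toReal := by
        intro i
        apply mul_le_mul_of_nonneg_right _ ENNReal.toReal_nonneg
        have hfl : β i j * q - 1 ≤ (p i j : ℝ) := by
          rw [hp]
          simp only
          linarith [Nat.sub_one_lt_floor (β i j * q)]
        rw [le_div_iff₀ hq1]
        have h2q : 2 / ((q : ℝ) + 1) * ((q : ℝ) + 1) = 2 := div_mul_cancel₀ _ hq1.ne'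
        nlinarith [hβle1 i j]
      have hstep2 : ∑ i, (p i j : ℝ) / ((q : ℝ) + 1) * (μ j (A i)).toReal
          ≤ ∑ i, (μ j (P i j)).toReal := by
        apply Finset.sum_le_sum
        intro i _
        have hthis := hP4 i j
        push_cast at hthis ⊢
        exact hthis
      have hstep3 : ∑ i, (β i j - 2 / ((q : ℝ) + 1)) * (μ j (A i)).toReal
          = w - 2 / ((q : ℝ) + 1) * c j := by
        have hexp : ∀ i, (β i j - 2 / ((q : ℝ) + 1)) * (μ j (A i)).toReal
            = β i j * (μ j (A i)).toReal - 2 / ((q : ℝ) + 1) * (μ j (A i)).toReal :=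
          fun i => by ring
        rw [Finset.sum_congr rfl (fun i _ => hexp i), Finset.sum_sub_distrib, hBj j,
          ← Finset.mul_sum, hsumA j]
      have hfinal : w - ε ≤ w - 2 / ((q : ℝ) + 1) * c j := by
        have hcc : 2 / ((q : ℝ) + 1) * c j ≤ 2 * Cr / ((q : ℝ) + 1) := by
          rw [div_mul_eq_mul_div]
          gcongr
          exact hcCr j
        linarith [hqe]
      calc w - ε ≤ w - 2 / ((q : ℝ) + 1) * c j := hfinal
        _ = ∑ i, (β i j - 2 / ((q : ℝ) + 1)) * (μ j (A i)).toReal := hstep3.symm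
        _ ≤ ∑ i, (p i j : ℝ) / ((q : ℝ) + 1) * (μ j (A i)).toReal :=
            Finset.sum_le_sum fun i _ => hstep1 i
        _ ≤ ∑ i, (μ j (P i j)).toReal := hstep2
        _ = (μ j (U j)).toReal := hsum1.symm
        _ ≤ (μ j (Q j)).toReal := hmono1
    exact ⟨⨅ j, (μ j (Q j)).toReal, ⟨Q, hQm, hQdisj, hQcover, rfl⟩, le_ciInf hval⟩
  by_contra hcon
  push_neg at hcon
  obtain ⟨r, hrT, hrge⟩ := hkey ((w - sSup Tset) / 2) (by linarith)
  have hrle : r ≤ sSup Tset := le_csSup hbdd hrT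
  linarith
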